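/- Let r ≥ 2 and let A be the order-r dimension-n adjacency tensor of a connected r-uniform hypergraph H with spectral radius ρ and principal eigenvector x (the unique positive vector with ∑ x_i^r = 1 and A x^{r−1} = ρ x^{[r−1]}). If vertices u, v are adjacent (both contained in some edge of H), then 1/ρ ≤ x_u/x_v ≤ ρ. -/

import Mathlib

/-- `hconn E k u v` : there is a walk of length `k` from `u` to `v` in the hypergraph
with edge set `E`, i.e. an alternating sequence of vertices and edges where consecutive
vertices both lie in the connecting edge. -/
def hconn {n : ℕ} (E : Finset (Finset (Fin n))) : ℕ → Fin n → Fin n → Prop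
  | 0, u, v => u = v
  | k + 1, u, v => ∃ e ∈ E, ∃ w ∈ e, u ∈ e ∧ hconn E k w v

/-- Distance between two vertices of a hypergraph: minimum length of a connecting walk. -/
noncomputable def hdist {n : ℕ} (E : Finset (Finset (Fin n))) (u v : Fin n) : ℕ :=
  sInf {k | hconn E k u v}

/-- Diameter of a hypergraph: maximum distance between two vertices. -/
noncomputable def hdiam {n : ℕ} (E : Finset (Finset (Fin n))) : ℕ :=
  sSup {d | ∃ u v : Fin n, hdist E u v = d}

/-- A hypergraph is connected if any two vertices are joined by a walk. -/
def HConnected {n : ℕ} (E : Finset (Finset (Fin n))) : Prop :=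
  ∀ u v : Fin n, ∃ k, hconn E k u v

/-- Degree of a vertex: the number of edges containing it. -/
def hdeg {n : ℕ} (E : Finset (Finset (Fin n))) (v : Fin n) : ℕ :=
  (E.filter (fun e => v ∈ e)).card

/-- The eigenvalue equation `A(H) x^{r-1} = ρ x^{[r-1]}` for the adjacency tensor of an
`r`-uniform hypergraph with edge set `E`: the `i`-th entry of `A(H) x^{r-1}` equals
`∑_{e ∋ i} ∏_{j ∈ e \ {i}} x_j`. -/
def EigenEq {n : ℕ} (E : Finset (Finset (Fin n))) (r : ℕ) (ρ : ℝ) (x : Fin n → ℝ) : Prop :=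
  ∀ i : Fin n, ∑ e ∈ E.filter (fun e => i ∈ e), ∏ j ∈ e.erase i, x j = ρ * x i ^ (r - 1)

theorem stmt_14 (n r : ℕ) (hr : 2 ≤ r) (E : Finset (Finset (Fin n)))
    (hu : ∀ e ∈ E, e.card = r) (hc : HConnected E)
    (ρ : ℝ) (x : Fin n → ℝ) (hx : ∀ i, 0 < x i) (hnorm : ∑ i, x i ^ r = 1)
    (heig : EigenEq E r ρ x)
    (u v : Fin n) (hne : u ≠ v) (hadj : ∃ e ∈ E, u ∈ e ∧ v ∈ e) :
    1 / ρ ≤ x u / x v ∧ x u / x v ≤ ρ := by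
  obtain ⟨e, he, hue, hve⟩ := hadj
  have hcard := hu e he
  obtain ⟨w, hwe, hwmin⟩ : ∃ w ∈ e, ∀ j ∈ e, x w ≤ x j := by
    obtain ⟨w, hw, hmin⟩ := e.exists_min_image x ⟨u, hue⟩
    exact ⟨w, hw, hmin⟩
  have hkey : ∀ i ∈ e, ∏ j ∈ e.erase i, x j ≤ ρ * x i ^ (r - 1) := by
    intro i hi
    rw [← heig i]
    refine Finset.single_le_sum (f := fun (s : Finset (Fin n)) => ∏ j ∈ s.erase i, x j) (fun f _ => Finset.prod_nonneg fun j _ => (hx j).le) ?_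
    simp only [Finset.mem_filter]
    exact ⟨he, hi⟩
  have hew : (e.erase w).card = r - 1 := by rw [Finset.card_erase_of_mem hwe, hcard]
  have hwpow : (0:ℝ) < x w ^ (r - 1) := pow_pos (hx w) _
  have hρ1 : 1 ≤ ρ := by
    have h1 : x w ^ (r - 1) ≤ ∏ j ∈ e.erase w, x j := by
      calc x w ^ (r - 1) = ∏ _j ∈ e.erase w, x w := by rw [Finset.prod_const, hew]
        _ ≤ ∏ j ∈ e.erase w, x j := Finset.prod_le_prod (fun j _ => (hx w).le)
            (fun j hj => hwmin j (Finset.mem_of_mem_erase hj))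
    nlinarith [h1.trans (hkey w hwe)]
  have hρ0 : (0:ℝ) < ρ := lt_of_lt_of_le one_pos hρ1
  have hB : ∀ a ∈ e, x a ≤ ρ * x w := by
    intro a ha
    by_cases haw : a = w
    · subst haw; nlinarith [hx a]
    · have hmem : a ∈ e.erase w := Finset.mem_erase.mpr ⟨haw, ha⟩
      have hcard2 : ((e.erase w).erase a).card = r - 2 := by
        rw [Finset.card_erase_of_mem hmem, hew]; omega
      have h2 : x a * x w ^ (r - 2) ≤ ∏ j ∈ e.erase w, x j := by
        rw [← Finset.mul_prod_erase _ _ hmem]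
        refine mul_le_mul_of_nonneg_left ?_ (hx a).le
        calc x w ^ (r - 2) = ∏ _j ∈ (e.erase w).erase a, x w := by
              rw [Finset.prod_const, hcard2]
          _ ≤ ∏ j ∈ (e.erase w).erase a, x j := Finset.prod_le_prod
              (fun j _ => (hx w).le)
              (fun j hj => hwmin j (Finset.mem_of_mem_erase (Finset.mem_of_mem_erase hj)))
      have h3 : x a * x w ^ (r - 2) ≤ ρ * (x w * x w ^ (r - 2)) := by
        have : x w ^ (r - 1) = x w * x w ^ (r - 2) := by
          rw [show r - 1 = (r - 2) + 1 by omega, pow_succ]; ring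
        have h4 := h2.trans (hkey w hwe)
        rw [this] at h4; linarith
      have hp2 : (0:ℝ) < x w ^ (r - 2) := pow_pos (hx w) _
      calc x a = x a * x w ^ (r - 2) / x w ^ (r - 2) := by field_simp
        _ ≤ ρ * (x w * x w ^ (r - 2)) / x w ^ (r - 2) := by gcongr
        _ = ρ * x w := by field_simp
  have hub : x u ≤ ρ * x v := (hB u hue).trans (by nlinarith [hwmin v hve])
  have hvb : x v ≤ ρ * x u := (hB v hve).trans (by nlinarith [hwmin u hue])
  constructor
  · rw [div_le_div_iff₀ hρ0 (hx v)]; nlinarith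
  · rw [div_le_iff₀ (hx v)]; nlinarith
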